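/- arXiv:2302.14697 — 2 statements merged into one kernel-verified Lean document; each statement's English description precedes it below -/
import Mathlib

section
/- For ideals I, J in a polynomial ring over an algebraically closed field, the vanishing set of the saturation I : J^∞ equals the Zariski closure of V(I) \ V(J). -/
open MvPolynomial

/-- The affine variety in `k^n` of a set of polynomials. -/
def zeroSet {k : Type*} [CommSemiring k] {n : ℕ}
    (S : Set (MvPolynomial (Fin n) k)) : Set (Fin n → k) :=
  {x | ∀ f ∈ S, eval x f = 0}

/-- The Zariski closure of a subset of `k^n`: the smallest affine variety containing it,
i.e. the common zero set of all polynomials vanishing on the set. -/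
def zariskiClosure {k : Type*} [CommSemiring k] {n : ℕ}
    (S : Set (Fin n → k)) : Set (Fin n → k) :=
  {x | ∀ f : MvPolynomial (Fin n) k, (∀ y ∈ S, eval y f = 0) → eval x f = 0}

/-- For ideals `I, J` in a polynomial ring over an algebraically closed field, the vanishing
set of the saturation `I : J^∞` equals the Zariski closure of `V(I) \ V(J)`. -/
theorem vanishing_of_saturation_eq_closure_diff
    {k : Type*} [Field k] [IsAlgClosed k] {n : ℕ}
    (I J : Ideal (MvPolynomial (Fin n) k)) :
    zeroSet {f | ∃ ℓ : ℕ, 0 < ℓ ∧ ∀ g ∈ J ^ ℓ, f * g ∈ I} =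
      zariskiClosure (zeroSet (I : Set (MvPolynomial (Fin n) k)) \
        zeroSet (J : Set (MvPolynomial (Fin n) k))) := by
  ext x
  constructor
  · intro hx f hf
    -- `f` vanishes on `V(I) \ V(J)`; show `eval x f = 0`.
    -- First: `span{f} * J ≤ radical I` via the Nullstellensatz.
    have hrad : Ideal.span {f} * J ≤ I.radical := by
      rw [Ideal.mul_le]
      intro a ha b hb
      rw [Ideal.mem_span_singleton] at ha
      obtain ⟨c, rfl⟩ := ha
      rw [mul_comm f c, mul_assoc]
      refine Ideal.mul_mem_left _ c ?_
      rw [← MvPolynomial.vanishingIdeal_zeroLocus_eq_radical (K := k) I,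
        MvPolynomial.mem_vanishingIdeal_iff]
      intro y hy
      show eval y (f * b) = 0
      rw [map_mul]
      by_cases hyb : eval y b = 0
      · rw [hyb, mul_zero]
      · have : y ∈ zeroSet (I : Set (MvPolynomial (Fin n) k)) \
            zeroSet (J : Set (MvPolynomial (Fin n) k)) := by
          refine ⟨fun p hp => hy p hp, fun hJ => hyb (hJ b hb)⟩
        rw [hf y this, zero_mul]
    obtain ⟨N, hN⟩ := Ideal.exists_pow_le_of_le_radical_of_fg hrad
      (IsNoetherian.noetherian _)
    -- `f^(N+1)` is in the saturation.
    have hmem : f ^ (N + 1) ∈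
        {f : MvPolynomial (Fin n) k | ∃ ℓ : ℕ, 0 < ℓ ∧ ∀ g ∈ J ^ ℓ, f * g ∈ I} := by
      refine ⟨N + 1, Nat.succ_pos N, fun g hg => ?_⟩
      have h1 : f ^ (N + 1) * g ∈ (Ideal.span {f} * J) ^ (N + 1) := by
        rw [mul_pow, Ideal.span_singleton_pow]
        exact Ideal.mul_mem_mul (Ideal.mem_span_singleton_self _) hg
      have h2 : (Ideal.span {f} * J) ^ (N + 1) ≤ I :=
        le_trans (Ideal.pow_le_pow_right (Nat.le_succ N)) hN
      exact h2 h1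
    have := hx _ hmem
    rw [map_pow] at this
    exact pow_eq_zero_iff (Nat.succ_ne_zero N) |>.mp this
  · rintro hx f ⟨ℓ, hℓ, hfJ⟩
    apply hx f
    rintro y ⟨hyI, hyJ⟩
    -- get `g ∈ J` with `eval y g ≠ 0`
    simp only [zeroSet, Set.mem_setOf_eq, not_forall] at hyJ
    obtain ⟨g, hg, hgy⟩ := hyJ
    have hIm : f * g ^ ℓ ∈ I := hfJ _ (Ideal.pow_mem_pow hg ℓ)
    have h0 : eval y (f * g ^ ℓ) = 0 := hyI _ hIm
    rw [map_mul, map_pow] at h0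
    rcases mul_eq_zero.mp h0 with h | h
    · exact h
    · exact absurd (pow_eq_zero_iff hℓ.ne' |>.mp h) hgy
end

section
/- Let L ⊆ ℂ[x_1,...,x_n,p_1,...,p_k] be an ideal with Gröbner basis G = {g₁,...,g_s} for the lex order x₁ > ... > x_n > p₁ > ... > p_k. For each g_i ∉ ℂ[p], write g_i = c_i(p)·x^{α_i} + h_i with all terms of h_i strictly smaller than x^{α_i}. If q ∈ V(L ∩ ℂ[p]) and c_i(q) ≠ 0 for all such i, then {φ_q(g_i) | g_i ∉ ℂ[p]} is a Gröbner basis of φ_q(L) ⊆ ℂ[x] for the lex order x₁ > ... > x_n. -/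
open MvPolynomial

variable {σ R : Type*} [CommSemiring R]

/-- The leading monomial (exponent vector) of a multivariate polynomial w.r.t. a monomial
order (the maximal element of its support; `0` for the zero polynomial). -/
noncomputable def leadMonomial (m : MonomialOrder σ) (p : MvPolynomial σ R) : σ →₀ ℕ :=
  m.toSyn.symm (p.support.sup m.toSyn)

/-- The leading term of a multivariate polynomial w.r.t. a monomial order. -/
noncomputable def leadTerm (m : MonomialOrder σ) (p : MvPolynomial σ R) : MvPolynomial σ R :=
  monomial (leadMonomial m p) (coeff (leadMonomial m p) p)

/-- The ideal generated by the leading terms of the nonzero elements of a set. -/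
noncomputable def ltIdeal (m : MonomialOrder σ) (S : Set (MvPolynomial σ R)) :
    Ideal (MvPolynomial σ R) :=
  Ideal.span {q | ∃ p ∈ S, p ≠ 0 ∧ q = leadTerm m p}

/-- `G` is a Gröbner basis of the ideal `L` relative to the monomial order `m`: a generating
set of `L` whose leading terms generate the ideal of leading terms of `L`. -/
def IsGroebnerBasis (m : MonomialOrder σ) (L : Ideal (MvPolynomial σ R))
    (G : Set (MvPolynomial σ R)) : Prop :=
  G ⊆ L ∧ Ideal.span G = L ∧ ltIdeal m G = ltIdeal m (L : Set (MvPolynomial σ R))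

namespace SpecGB

open Finsupp

section LMAPI
variable (m : MonomialOrder σ)

lemma toSyn_leadMonomial (p : MvPolynomial σ R) :
    m.toSyn (leadMonomial m p) = p.support.sup m.toSyn := by
  simp [leadMonomial]

lemma leadMonomial_mem_support {p : MvPolynomial σ R} (hp : p ≠ 0) :
    leadMonomial m p ∈ p.support := by
  obtain ⟨b, hb, hbe⟩ := Finset.exists_mem_eq_sup p.support
    (by simpa using hp) m.toSyn
  have : leadMonomial m p = b := by
    simp [leadMonomial, hbe]
  rwa [this]

lemma le_toSyn_leadMonomial {p : MvPolynomial σ R} {d : σ →₀ ℕ} (hd : d ∈ p.support) :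
    m.toSyn d ≤ m.toSyn (leadMonomial m p) := by
  rw [toSyn_leadMonomial]; exact Finset.le_sup hd

lemma coeff_eq_zero_of_gt {p : MvPolynomial σ R} {d : σ →₀ ℕ}
    (h : m.toSyn (leadMonomial m p) < m.toSyn d) : coeff d p = 0 := by
  by_contra hc
  exact absurd (le_toSyn_leadMonomial m (by simpa [MvPolynomial.mem_support_iff] using hc)) (not_le.2 h)

lemma lc_ne_zero {p : MvPolynomial σ R} (hp : p ≠ 0) :
    coeff (leadMonomial m p) p ≠ 0 := by
  simpa [MvPolynomial.mem_support_iff] using leadMonomial_mem_support m hp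

lemma leadMonomial_eq_of {p : MvPolynomial σ R} {β : σ →₀ ℕ}
    (h1 : coeff β p ≠ 0) (h2 : ∀ d, m.toSyn β < m.toSyn d → coeff d p = 0) :
    leadMonomial m p = β := by
  have hp : p ≠ 0 := fun h => h1 (by simp [h])
  have hle : m.toSyn (leadMonomial m p) ≤ m.toSyn β := by
    by_contra hlt
    exact lc_ne_zero m hp (h2 _ (not_le.1 hlt))
  have hge : m.toSyn β ≤ m.toSyn (leadMonomial m p) :=
    le_toSyn_leadMonomial m (by simpa [MvPolynomial.mem_support_iff] using h1)
  exact m.toSyn.injective (le_antisymm hle hge)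

lemma coeff_monomial_mul_add {e : σ →₀ ℕ} {a : R} (g : MvPolynomial σ R) (d : σ →₀ ℕ) :
    coeff (e + d) (monomial e a * g) = a * coeff d g := by
  simpa using coeff_monomial_mul d e a g

/-- lead monomial of `monomial e a * g`. -/
lemma leadMonomial_monomial_mul {R : Type*} [CommRing R] [NoZeroDivisors R]
    (m : MonomialOrder σ) {e : σ →₀ ℕ} {a : R} (ha : a ≠ 0)
    {g : MvPolynomial σ R} (hg : g ≠ 0) :
    leadMonomial m (monomial e a * g) = e + leadMonomial m g ∧
      coeff (e + leadMonomial m g) (monomial e a * g) = a * coeff (leadMonomial m g) g := by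
  have hco : coeff (e + leadMonomial m g) (monomial e a * g)
      = a * coeff (leadMonomial m g) g := coeff_monomial_mul_add g _
  have h1 : coeff (e + leadMonomial m g) (monomial e a * g) ≠ 0 := by
    rw [hco]; exact mul_ne_zero ha (lc_ne_zero m hg)
  refine ⟨leadMonomial_eq_of m h1 ?_, hco⟩
  intro d hd
  rw [coeff_monomial_mul']
  split_ifs with hle
  · have hd' : m.toSyn (leadMonomial m g) < m.toSyn (d - e) := by
      have hdec : d - e + e = d := tsub_add_cancel_of_le hle
      have : m.toSyn e + m.toSyn (leadMonomial m g) < m.toSyn (d - e) + m.toSyn e := by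
        calc m.toSyn e + m.toSyn (leadMonomial m g) = m.toSyn (e + leadMonomial m g) := by
              rw [map_add]
          _ < m.toSyn d := hd
          _ = m.toSyn (d - e + e) := by rw [hdec]
          _ = m.toSyn (d - e) + m.toSyn e := by rw [map_add]
      rw [add_comm (m.toSyn (d-e))] at this
      exact lt_of_add_lt_add_left this
    rw [coeff_eq_zero_of_gt m hd', mul_zero]
  · rfl

/-- cancellation of equal lead terms -/
lemma sub_leadTerm_lt {R : Type*} [CommRing R] (m : MonomialOrder σ)
    {a b : MvPolynomial σ R} (ha : a ≠ 0)
    (hlm : leadMonomial m a = leadMonomial m b)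
    (hlc : coeff (leadMonomial m a) a = coeff (leadMonomial m b) b)
    (hne : a - b ≠ 0) :
    m.toSyn (leadMonomial m (a - b)) < m.toSyn (leadMonomial m a) := by
  have hmem := leadMonomial_mem_support m hne
  rw [MvPolynomial.mem_support_iff] at hmem
  have hle : m.toSyn (leadMonomial m (a - b)) ≤ m.toSyn (leadMonomial m a) := by
    by_contra hlt
    push_neg at hlt
    have h1 : coeff (leadMonomial m (a-b)) a = 0 := coeff_eq_zero_of_gt m hlt
    have h2 : coeff (leadMonomial m (a-b)) b = 0 := coeff_eq_zero_of_gt m (hlm ▸ hlt)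
    exact hmem (by simp [coeff_sub, h1, h2])
  rcases lt_or_eq_of_le hle with h | h
  · exact h
  · exfalso
    have heq : leadMonomial m (a - b) = leadMonomial m a := m.toSyn.injective h
    apply hmem
    rw [heq, coeff_sub, hlc, hlm, sub_self]

end LMAPI


variable {n k : ℕ}

noncomputable def xp (m : (Fin n ⊕ₗ Fin k) →₀ ℕ) : Fin n →₀ ℕ :=
  (sumFinsuppEquivProdFinsupp (m : (Fin n ⊕ Fin k) →₀ ℕ)).1
noncomputable def pp (m : (Fin n ⊕ₗ Fin k) →₀ ℕ) : Fin k →₀ ℕ :=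
  (sumFinsuppEquivProdFinsupp (m : (Fin n ⊕ Fin k) →₀ ℕ)).2
noncomputable def cmb (u : Fin n →₀ ℕ) (v : Fin k →₀ ℕ) : (Fin n ⊕ₗ Fin k) →₀ ℕ :=
  (sumFinsuppEquivProdFinsupp.symm (u, v) : (Fin n ⊕ Fin k) →₀ ℕ)
@[simp] lemma xp_apply (m : (Fin n ⊕ₗ Fin k) →₀ ℕ) (i : Fin n) : xp m i = m (Sum.inl i) := rfl
@[simp] lemma pp_apply (m : (Fin n ⊕ₗ Fin k) →₀ ℕ) (j : Fin k) : pp m j = m (Sum.inr j) := rfl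
@[simp] lemma cmb_inl (u : Fin n →₀ ℕ) (v : Fin k →₀ ℕ) (i : Fin n) :
    cmb u v (Sum.inl i) = u i := sumFinsuppEquivProdFinsupp_symm_inl _ _
@[simp] lemma cmb_inr (u : Fin n →₀ ℕ) (v : Fin k →₀ ℕ) (j : Fin k) :
    cmb u v (Sum.inr j) = v j := sumFinsuppEquivProdFinsupp_symm_inr _ _
lemma sum_cases (x : Fin n ⊕ₗ Fin k) : (∃ i, x = Sum.inl i) ∨ ∃ j, x = Sum.inr j := by
  rcases (x : Fin n ⊕ Fin k) with i | j
  · exact Or.inl ⟨i, rfl⟩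
  · exact Or.inr ⟨j, rfl⟩
lemma cmb_xp_pp (m : (Fin n ⊕ₗ Fin k) →₀ ℕ) : cmb (xp m) (pp m) = m := by
  ext x; rcases sum_cases x with ⟨i, rfl⟩ | ⟨j, rfl⟩ <;> simp
@[simp] lemma xp_cmb (u : Fin n →₀ ℕ) (v : Fin k →₀ ℕ) : xp (cmb u v) = u := by ext i; simp
@[simp] lemma pp_cmb (u : Fin n →₀ ℕ) (v : Fin k →₀ ℕ) : pp (cmb u v) = v := by ext j; simp
@[simp] lemma xp_zero : xp (0 : (Fin n ⊕ₗ Fin k) →₀ ℕ) = 0 := by ext i; rfl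
@[simp] lemma pp_zero : pp (0 : (Fin n ⊕ₗ Fin k) →₀ ℕ) = 0 := by ext j; rfl
@[simp] lemma xp_add (a b : (Fin n ⊕ₗ Fin k) →₀ ℕ) : xp (a + b) = xp a + xp b := by ext i; rfl
@[simp] lemma pp_add (a b : (Fin n ⊕ₗ Fin k) →₀ ℕ) : pp (a + b) = pp a + pp b := by ext j; rfl
@[simp] lemma xp_tsub (a b : (Fin n ⊕ₗ Fin k) →₀ ℕ) : xp (a - b) = xp a - xp b := by
  ext i; rfl

lemma xp_mono {a b : (Fin n ⊕ₗ Fin k) →₀ ℕ} (h : a ≤ b) : xp a ≤ xp b := by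
  rw [Finsupp.le_def] at h ⊢
  intro i; simpa using h (Sum.inl i)

/-- The key splitting of the lexicographic order on the sum. -/
lemma lex_split {a b : (Fin n ⊕ₗ Fin k) →₀ ℕ} :
    toLex a < toLex b ↔
      toLex (xp a) < toLex (xp b) ∨ (xp a = xp b ∧ toLex (pp a) < toLex (pp b)) := by
  constructor
  · intro h
    obtain ⟨i, hj, hi⟩ := Finsupp.Lex.lt_iff.1 h
    rcases sum_cases i with ⟨i', rfl⟩ | ⟨j', rfl⟩
    · left
      refine Finsupp.Lex.lt_iff.2 ⟨i', fun j hj' => ?_, by simpa using hi⟩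
      simpa using hj (Sum.inl j) (Sum.Lex.inl_lt_inl_iff.2 hj')
    · right
      constructor
      · ext i''
        simpa using hj (Sum.inl i'') (Sum.Lex.inl_lt_inr _ _)
      · refine Finsupp.Lex.lt_iff.2 ⟨j', fun j hj' => ?_, by simpa using hi⟩
        simpa using hj (Sum.inr j) (Sum.Lex.inr_lt_inr_iff.2 hj')
  · rintro (h | ⟨hxp, h⟩)
    · obtain ⟨i', hj, hi⟩ := Finsupp.Lex.lt_iff.1 h
      refine Finsupp.Lex.lt_iff.2 ⟨Sum.inl i', fun j hj' => ?_, by simpa using hi⟩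
      rcases sum_cases j with ⟨i'', rfl⟩ | ⟨j'', rfl⟩
      · simpa using hj i'' (Sum.Lex.inl_lt_inl_iff.1 hj')
      · exact absurd hj' Sum.Lex.not_inr_lt_inl
    · obtain ⟨j', hj, hi⟩ := Finsupp.Lex.lt_iff.1 h
      refine Finsupp.Lex.lt_iff.2 ⟨Sum.inr j', fun j hj' => ?_, by simpa using hi⟩
      rcases sum_cases j with ⟨i'', rfl⟩ | ⟨j'', rfl⟩
      · have := congrArg (fun u => u i'') hxp
        simpa using this
      · simpa using hj j'' (Sum.Lex.inr_lt_inr_iff.1 hj')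

lemma lex_xp_le {a b : (Fin n ⊕ₗ Fin k) →₀ ℕ} (h : toLex a ≤ toLex b) :
    toLex (xp a) ≤ toLex (xp b) := by
  rcases lt_or_eq_of_le h with h | h
  · rcases lex_split.1 h with h | ⟨h, _⟩
    · exact le_of_lt h
    · exact le_of_eq (congrArg toLex h)
  · have : a = b := toLex.injective h
    rw [this]


/-- the structural equivalence -/
noncomputable def ee (n k : ℕ) :
    MvPolynomial (Fin n ⊕ₗ Fin k) ℂ ≃ₐ[ℂ] MvPolynomial (Fin n) (MvPolynomial (Fin k) ℂ) :=
  sumAlgEquiv ℂ (Fin n) (Fin k)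

/-- the inclusion of `ℂ[p]` into the big ring -/
noncomputable abbrev iop (n k : ℕ) :
    MvPolynomial (Fin k) ℂ →ₐ[ℂ] MvPolynomial (Fin n ⊕ₗ Fin k) ℂ :=
  rename Sum.inr

@[simp] lemma xp_single_inl (i : Fin n) (e : ℕ) :
    xp (Finsupp.single (Sum.inl i : Fin n ⊕ₗ Fin k) e) = Finsupp.single i e := by
  ext i''
  rw [xp_apply]
  refine (show (Finsupp.single (Sum.inl i : Fin n ⊕ₗ Fin k) e) (Sum.inl i'' : Fin n ⊕ₗ Fin k)
      = if (Sum.inl i : Fin n ⊕ₗ Fin k) = Sum.inl i'' then e else 0 from Finsupp.single_apply).trans ?_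
  rw [Finsupp.single_apply]
  split_ifs with h h2 h3
  · rfl
  · exact absurd (by injection h) h2
  · exact absurd (by rw [h3]) h
  · rfl
@[simp] lemma pp_single_inl (i : Fin n) (e : ℕ) :
    pp (Finsupp.single (Sum.inl i : Fin n ⊕ₗ Fin k) e) = 0 := by
  ext j''; exact Finsupp.single_eq_of_ne' (fun h => Sum.inl_ne_inr (h : (Sum.inl i : Fin n ⊕ Fin k) = Sum.inr j''))
@[simp] lemma xp_single_inr (j : Fin k) (e : ℕ) :
    xp (Finsupp.single (Sum.inr j : Fin n ⊕ₗ Fin k) e) = 0 := by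
  ext i''; exact Finsupp.single_eq_of_ne' (fun h => Sum.inr_ne_inl (h : (Sum.inr j : Fin n ⊕ Fin k) = Sum.inl i''))
@[simp] lemma pp_single_inr (j : Fin k) (e : ℕ) :
    pp (Finsupp.single (Sum.inr j : Fin n ⊕ₗ Fin k) e) = Finsupp.single j e := by
  ext j''
  rw [pp_apply]
  refine (show (Finsupp.single (Sum.inr j : Fin n ⊕ₗ Fin k) e) (Sum.inr j'' : Fin n ⊕ₗ Fin k)
      = if (Sum.inr j : Fin n ⊕ₗ Fin k) = Sum.inr j'' then e else 0 from Finsupp.single_apply).trans ?_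
  rw [Finsupp.single_apply]
  split_ifs with h h2 h3
  · rfl
  · exact absurd (by injection h) h2
  · exact absurd (by rw [h3]) h
  · rfl

lemma ee_monomial (m : (Fin n ⊕ₗ Fin k) →₀ ℕ) (a : ℂ) :
    ee n k (monomial m a) = monomial (xp m) (monomial (pp m) a) := by
  induction m using Finsupp.induction generalizing a with
  | zero =>
    simp only [monomial_zero', xp_zero, pp_zero]
    show (sumAlgEquiv ℂ (Fin n) (Fin k)) (C a) = _
    simp [sumAlgEquiv_C_inl]
  | single_add i e f hif he ih =>
    have key : (monomial (Finsupp.single i e + f) a : MvPolynomial (Fin n ⊕ₗ Fin k) ℂ)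
        = monomial (Finsupp.single i e) 1 * monomial f a := by
      rw [monomial_mul, one_mul]
    rw [key, map_mul, ih, ← X_pow_eq_monomial]
    rcases sum_cases i with ⟨i', rfl⟩ | ⟨j', rfl⟩
    · have hx : ee n k (X (Sum.inl i')) = X i' := by
        show (sumAlgEquiv ℂ (Fin n) (Fin k)) (X (Sum.inl i')) = X i'
        simp [sumAlgEquiv_X_inl]
      rw [map_pow, hx, X_pow_eq_monomial, monomial_mul, xp_add, pp_add, xp_single_inl,
        pp_single_inl, zero_add, one_mul]
    · have hx : ee n k (X (Sum.inr j')) = C (X j') := by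
        show (sumAlgEquiv ℂ (Fin n) (Fin k)) (X (Sum.inr j')) = C (X j')
        simp [sumAlgEquiv_X_inr]
      rw [map_pow, hx, ← C_pow, X_pow_eq_monomial, ← monomial_zero', monomial_mul, monomial_mul,
        xp_add, pp_add, xp_single_inr, pp_single_inr, zero_add, one_mul]

/-- slice: the coefficient of an x-monomial, as a polynomial in p. -/
noncomputable def Slc (γ : Fin n →₀ ℕ) (F : MvPolynomial (Fin n ⊕ₗ Fin k) ℂ) :
    MvPolynomial (Fin k) ℂ :=
  coeff γ (ee n k F)

lemma coeff_coeff_ee (γ : Fin n →₀ ℕ) (ρ : Fin k →₀ ℕ) (F : MvPolynomial (Fin n ⊕ₗ Fin k) ℂ) :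
    coeff ρ (Slc γ F) = coeff (cmb γ ρ) F := by
  unfold Slc
  induction F using MvPolynomial.induction_on' with
  | monomial u a =>
    rw [ee_monomial, coeff_monomial, coeff_monomial]
    by_cases h : u = cmb γ ρ
    · subst h
      simp [coeff_monomial]
    · rw [if_neg h]
      by_cases hx : xp u = γ
      · rw [if_pos hx, coeff_monomial, if_neg]
        intro hp
        exact h (by rw [← cmb_xp_pp u, hx, hp])
      · rw [if_neg hx, coeff_zero]
  | add p q hp hq => simp [map_add, coeff_add, hp, hq]



section Bridge
variable {n k : ℕ}

noncomputable abbrev mS (n k : ℕ) : MonomialOrder (Fin n ⊕ₗ Fin k) := MonomialOrder.lex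
noncomputable abbrev mX (n : ℕ) : MonomialOrder (Fin n) := MonomialOrder.lex

lemma lex_toSyn {τ : Type*} [LinearOrder τ] [WellFoundedGT τ] (a : τ →₀ ℕ) :
    (MonomialOrder.lex : MonomialOrder τ).toSyn a = toLex a := rfl

@[simp] lemma ee_X_inl (i : Fin n) : ee n k (X (Sum.inl i)) = X i := by
  show (sumAlgEquiv ℂ (Fin n) (Fin k)) (X (Sum.inl i)) = X i
  simp [sumAlgEquiv_X_inl]

@[simp] lemma ee_X_inr (j : Fin k) : ee n k (X (Sum.inr j)) = C (X j) := by
  show (sumAlgEquiv ℂ (Fin n) (Fin k)) (X (Sum.inr j)) = C (X j)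
  simp [sumAlgEquiv_X_inr]

@[simp] lemma ee_C (a : ℂ) : ee n k (C a) = C (C a) := by
  have := ee_monomial (0 : (Fin n ⊕ₗ Fin k) →₀ ℕ) a
  simpa [monomial_zero'] using this

lemma ee_rename_inr (w : MvPolynomial (Fin k) ℂ) :
    ee n k (iop n k w) = C w := by
  have h := AlgHom.congr_fun (sumAlgEquiv_comp_rename_inr ℂ (Fin n) (Fin k)) w
  simp [algebraMap_eq] at h
  exact h

lemma mem_support_ee {F : MvPolynomial (Fin n ⊕ₗ Fin k) ℂ} {γ : Fin n →₀ ℕ} :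
    γ ∈ (ee n k F).support ↔ ∃ ρ, cmb γ ρ ∈ F.support := by
  constructor
  · intro h
    rw [MvPolynomial.mem_support_iff] at h
    have : Slc γ F ≠ 0 := h
    obtain ⟨ρ, hρ⟩ := ne_zero_iff.1 this
    exact ⟨ρ, by rwa [MvPolynomial.mem_support_iff, ← coeff_coeff_ee]⟩
  · rintro ⟨ρ, hρ⟩
    rw [MvPolynomial.mem_support_iff] at hρ ⊢
    rw [← coeff_coeff_ee] at hρ
    intro h
    rw [show coeff γ (ee n k F) = Slc γ F from rfl] at h
    rw [h] at hρ
    simp at hρ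

lemma ee_ne_zero {F : MvPolynomial (Fin n ⊕ₗ Fin k) ℂ} (hF : F ≠ 0) : ee n k F ≠ 0 := by
  intro h
  exact hF ((ee n k).toEquiv.injective (by simpa using h))

/-- key: the x-part of the full lex lead monomial is the lead x-monomial. -/
lemma xp_leadMonomial {F : MvPolynomial (Fin n ⊕ₗ Fin k) ℂ} (hF : F ≠ 0) :
    xp (leadMonomial (mS n k) F) = leadMonomial (mX n) (ee n k F) := by
  have h1 : leadMonomial (mS n k) F ∈ F.support := leadMonomial_mem_support _ hF
  have h2 : xp (leadMonomial (mS n k) F) ∈ (ee n k F).support := by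
    rw [mem_support_ee]
    exact ⟨pp _, by rwa [cmb_xp_pp]⟩
  have h3 : leadMonomial (mX n) (ee n k F) ∈ (ee n k F).support :=
    leadMonomial_mem_support _ (ee_ne_zero hF)
  obtain ⟨ρ, hρ⟩ := mem_support_ee.1 h3
  have h4 : toLex (xp (leadMonomial (mS n k) F)) ≤ toLex (leadMonomial (mX n) (ee n k F)) := by
    have := le_toSyn_leadMonomial (mX n) h2
    rwa [lex_toSyn, lex_toSyn] at this
  have h5 : toLex (leadMonomial (mX n) (ee n k F)) ≤ toLex (xp (leadMonomial (mS n k) F)) := by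
    have := le_toSyn_leadMonomial (mS n k) hρ
    rw [lex_toSyn, lex_toSyn] at this
    have := lex_xp_le this
    rwa [xp_cmb] at this
  exact toLex.injective (le_antisymm h4 h5)

section WithQ
variable (q : Fin k → ℂ)

noncomputable def phi (n : ℕ) : MvPolynomial (Fin n ⊕ₗ Fin k) ℂ →ₐ[ℂ] MvPolynomial (Fin n) ℂ :=
  aeval (Sum.elim X fun j => C (q j))

lemma phi_eq (F : MvPolynomial (Fin n ⊕ₗ Fin k) ℂ) :
    phi q n F = MvPolynomial.map (eval q) (ee n k F) := by
  have : (phi q n).toRingHom =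
      (MvPolynomial.map (eval q)).comp ((ee n k : MvPolynomial (Fin n ⊕ₗ Fin k) ℂ ≃ₐ[ℂ]
        MvPolynomial (Fin n) (MvPolynomial (Fin k) ℂ)) : _ →+* _) := by
    apply MvPolynomial.ringHom_ext
    · intro a
      simp [phi, algebraMap_eq]
    · intro i
      rcases sum_cases i with ⟨i', rfl⟩ | ⟨j', rfl⟩
      · simp [phi]
        exact aeval_X _ _
      · simp [phi]
        exact aeval_X _ _
  exact RingHom.congr_fun this F

lemma coeff_phi (γ : Fin n →₀ ℕ) (F : MvPolynomial (Fin n ⊕ₗ Fin k) ℂ) :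
    coeff γ (phi q n F) = eval q (Slc γ F) := by
  rw [phi_eq, coeff_map]; rfl

lemma phi_rename_inr (w : MvPolynomial (Fin k) ℂ) :
    phi q n (iop n k w) = C (eval q w) := by
  rw [phi_eq, ee_rename_inr, map_C]

lemma phi_monX (ν : Fin n →₀ ℕ) :
    phi q n (monomial (cmb ν 0) (1 : ℂ)) = monomial ν 1 := by
  rw [phi_eq, ee_monomial, map_monomial, xp_cmb, pp_cmb]
  norm_num

end WithQ
end Bridge

section Stairs
variable {n k : ℕ}

/-- the lead `x`-monomial of a polynomial in the big ring -/
noncomputable def alphag (n k : ℕ) (g : MvPolynomial (Fin n ⊕ₗ Fin k) ℂ) : Fin n →₀ ℕ :=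
  leadMonomial (mX n) (ee n k g)

/-- the lead `x`-coefficient (an element of `ℂ[p]`) -/
noncomputable def cg (n k : ℕ) (g : MvPolynomial (Fin n ⊕ₗ Fin k) ℂ) : MvPolynomial (Fin k) ℂ :=
  Slc (alphag n k g) g

/-- `f` has a strictly decreasing staircase representation in terms of the specialized
generators, with all levels bounded by `B`. -/
inductive Stair (n k : ℕ) (q : Fin k → ℂ) (G : Set (MvPolynomial (Fin n ⊕ₗ Fin k) ℂ)) :
    Lex (Fin n →₀ ℕ) → MvPolynomial (Fin n) ℂ → Prop
  | zero (B) : Stair n k q G B 0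
  | step {B B' : Lex (Fin n →₀ ℕ)} {κ : ℂ} {μ : Fin n →₀ ℕ}
      {g : MvPolynomial (Fin n ⊕ₗ Fin k) ℂ} {f' : MvPolynomial (Fin n) ℂ}
      (hg : g ∈ G)
      (hgr : g ∉ Set.range (iop n k))
      (hle : toLex (μ + alphag n k g) ≤ B)
      (hf' : Stair n k q G B' f')
      (hlt : f' ≠ 0 → B' < toLex (μ + alphag n k g)) :
      Stair n k q G B (monomial μ κ * phi q n g + f')

variable {q : Fin k → ℂ} {G : Set (MvPolynomial (Fin n ⊕ₗ Fin k) ℂ)}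

lemma stair_weaken {B B₂ : Lex (Fin n →₀ ℕ)} {f} (h : Stair n k q G B f) (hB : B ≤ B₂) :
    Stair n k q G B₂ f := by
  cases h with
  | zero => exact Stair.zero B₂
  | step hg hgr hle hf' hlt => exact Stair.step hg hgr (le_trans hle hB) hf' hlt

lemma stair_smul {B : Lex (Fin n →₀ ℕ)} {f} (c : ℂ) (h : Stair n k q G B f) :
    Stair n k q G B (c • f) := by
  induction h with
  | zero B => rw [smul_zero]; exact Stair.zero B
  | step hg hgr hle hf' hlt ih =>
    rw [smul_add, ← smul_mul_assoc, smul_monomial, smul_eq_mul]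
    exact Stair.step hg hgr hle ih (fun h0 => hlt (by rintro rfl; simp at h0))

lemma phi_lm {g : MvPolynomial (Fin n ⊕ₗ Fin k) ℂ} (hcg : eval q (cg n k g) ≠ 0) :
    leadMonomial (mX n) (phi q n g) = alphag n k g ∧
      coeff (alphag n k g) (phi q n g) = eval q (cg n k g) := by
  have hco : coeff (alphag n k g) (phi q n g) = eval q (cg n k g) := coeff_phi q _ g
  refine ⟨leadMonomial_eq_of (mX n) (by rw [hco]; exact hcg) ?_, hco⟩
  intro d hd
  rw [coeff_phi]
  have : Slc d g = 0 := coeff_eq_zero_of_gt (mX n) hd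
  rw [this, map_zero]

lemma stair_extract
    (hcG : ∀ g ∈ G, g ∉ Set.range (iop n k) →
      eval q (cg n k g) ≠ 0)
    {B : Lex (Fin n →₀ ℕ)} {f} (hst : Stair n k q G B f) (hf : f ≠ 0) :
    toLex (leadMonomial (mX n) f) ≤ B ∧
      ∃ g ∈ G, g ∉ Set.range (iop n k) ∧
        alphag n k g ≤ leadMonomial (mX n) f := by
  induction hst with
  | zero B => exact absurd rfl hf
  | @step B B' κ μ g f' hg hgr hle hf' hlt ih =>
    by_cases hκ : κ = 0
    · rw [hκ] at hf ⊢
      simp only [monomial_zero, zero_mul, zero_add] at hf ⊢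
      obtain ⟨h1, h2⟩ := ih hf
      exact ⟨le_trans h1 (le_trans (le_of_lt (hlt hf)) hle), h2⟩
    · have hcg := hcG g hg hgr
      have hphig : phi q n g ≠ 0 := by
        intro h0
        apply hcg
        rw [← (phi_lm hcg).2, h0, coeff_zero]
      obtain ⟨hlm, hlc⟩ := leadMonomial_monomial_mul (mX n) hκ hphig (e := μ) (a := κ)
      rw [(phi_lm hcg).1] at hlm hlc
      have hlmf : leadMonomial (mX n) (monomial μ κ * phi q n g + f') = μ + alphag n k g := by
        apply leadMonomial_eq_of (mX n)
        · rw [coeff_add, hlc, (phi_lm hcg).2]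
          have hzero : coeff (μ + alphag n k g) f' = 0 := by
            by_cases h0 : f' = 0
            · rw [h0, coeff_zero]
            · apply coeff_eq_zero_of_gt (mX n)
              rw [lex_toSyn, lex_toSyn]
              calc toLex (leadMonomial (mX n) f')
                  ≤ B' := (ih h0).1
                _ < toLex (μ + alphag n k g) := hlt h0
          rw [hzero, add_zero]
          exact mul_ne_zero hκ hcg
        · intro d hd
          rw [coeff_add]
          have h1 : coeff d (monomial μ κ * phi q n g) = 0 := by
            apply coeff_eq_zero_of_gt (mX n)
            rwa [hlm]
          have h2 : coeff d f' = 0 := by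
            by_cases h0 : f' = 0
            · rw [h0, coeff_zero]
            · apply coeff_eq_zero_of_gt (mX n)
              rw [lex_toSyn, lex_toSyn] at hd ⊢
              calc toLex (leadMonomial (mX n) f')
                  ≤ B' := (ih h0).1
                _ < toLex (μ + alphag n k g) := hlt h0
                _ < toLex d := hd
          rw [h1, h2, add_zero]
      rw [hlmf]
      exact ⟨hle, g, hg, hgr, le_add_self⟩

end Stairs

section Core
variable {n k : ℕ} {L : Ideal (MvPolynomial (Fin n ⊕ₗ Fin k) ℂ)}
  {G : Set (MvPolynomial (Fin n ⊕ₗ Fin k) ℂ)} {q : Fin k → ℂ}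

/-- saturated membership of the elimination ideal -/
def SatE (L : Ideal (MvPolynomial (Fin n ⊕ₗ Fin k) ℂ)) (q : Fin k → ℂ)
    (c : MvPolynomial (Fin k) ℂ) : Prop :=
  ∃ s : MvPolynomial (Fin k) ℂ, eval q s ≠ 0 ∧
    iop n k (s * c) ∈ L

lemma satE_zero : SatE L q 0 := ⟨1, by simp, by simp⟩

lemma satE_of_sub_mul {c d w : MvPolynomial (Fin k) ℂ}
    (hw : iop n k w ∈ L)
    (h : SatE L q (c - d * w)) : SatE L q c := by
  obtain ⟨s, hs, hmem⟩ := h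
  refine ⟨s, hs, ?_⟩
  have hid : iop n k (s * c)
      = iop n k (s * (c - d * w))
        + iop n k (s * d)
          * iop n k w := by
    rw [← map_mul, ← map_add]
    congr 1
    ring
  rw [hid]
  exact Ideal.add_mem _ hmem (Ideal.mul_mem_left _ _ hw)

lemma divisor (hG : IsGroebnerBasis (mS n k) L G) {v : MvPolynomial (Fin n ⊕ₗ Fin k) ℂ}
    (hv : v ∈ L) (hv0 : v ≠ 0) :
    ∃ g ∈ G, g ≠ 0 ∧ leadMonomial (mS n k) g ≤ leadMonomial (mS n k) v := by
  have h1 : leadTerm (mS n k) v ∈ ltIdeal (mS n k) (L : Set (MvPolynomial (Fin n ⊕ₗ Fin k) ℂ)) :=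
    Ideal.subset_span ⟨v, hv, hv0, rfl⟩
  rw [← hG.2.2] at h1
  set S : Set ((Fin n ⊕ₗ Fin k) →₀ ℕ) := {d | ∃ g ∈ G, g ≠ 0 ∧ d = leadMonomial (mS n k) g}
    with hS
  have h2 : ltIdeal (mS n k) G ≤ Ideal.span ((fun s => monomial s (1 : ℂ)) '' S) := by
    rw [ltIdeal, Ideal.span_le]
    rintro w ⟨p, hp, hp0, rfl⟩
    have hw : leadTerm (mS n k) p
        = C (coeff (leadMonomial (mS n k) p) p) * monomial (leadMonomial (mS n k) p) (1 : ℂ) := by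
      rw [C_mul_monomial, mul_one]; rfl
    rw [hw]
    exact Ideal.mul_mem_left _ _ (Ideal.subset_span
      (Set.mem_image_of_mem _ (show leadMonomial (mS n k) p ∈ S from ⟨p, hp, hp0, rfl⟩)))
  have h3 := mem_ideal_span_monomial_image.1 (h2 h1)
  have h4 : leadMonomial (mS n k) v ∈ (leadTerm (mS n k) v).support := by
    rw [leadTerm, MvPolynomial.mem_support_iff, coeff_monomial, if_pos rfl]
    exact lc_ne_zero _ hv0
  obtain ⟨si, hsi, hle⟩ := h3 _ h4
  obtain ⟨g, hg, hg0, rfl⟩ := hsi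
  exact ⟨g, hg, hg0, hle⟩

lemma inner (hG : IsGroebnerBasis (mS n k) L G)
    (M : Lex ((Fin n ⊕ₗ Fin k) →₀ ℕ)) :
    ∀ v : MvPolynomial (Fin n ⊕ₗ Fin k) ℂ,
      v ∈ L → v ≠ 0 → toLex (leadMonomial (mS n k) v) = M →
      ¬ SatE L q (Slc (alphag n k v) v) →
      ∃ g ∈ G, g ∉ Set.range (iop n k) ∧
        alphag n k g ≤ alphag n k v := by
  induction M using WellFoundedLT.induction with
  | _ M IH =>
  intro v hv hv0 hM hSat
  obtain ⟨g, hgG, hg0, hgle⟩ := divisor hG hv hv0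
  by_cases hgr : g ∈ Set.range (iop n k)
  case neg =>
    refine ⟨g, hgG, hgr, ?_⟩
    have h1 : xp (leadMonomial (mS n k) g) ≤ xp (leadMonomial (mS n k) v) := xp_mono hgle
    rwa [xp_leadMonomial hg0, xp_leadMonomial hv0] at h1
  case pos =>
    obtain ⟨w, rfl⟩ := hgr
    set β := alphag n k v with hβdef
    set Lv := leadMonomial (mS n k) v with hLvdef
    set Lg := leadMonomial (mS n k) (iop n k w) with hLgdef
    have hlcg : coeff Lg (iop n k w) ≠ 0 := lc_ne_zero _ hg0
    have hlcv : coeff Lv v ≠ 0 := lc_ne_zero _ hv0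
    set a : ℂ := coeff Lv v / coeff Lg (iop n k w) with hadef
    have ha : a ≠ 0 := div_ne_zero hlcv hlcg
    set t : MvPolynomial (Fin n ⊕ₗ Fin k) ℂ := monomial (Lv - Lg) a with htdef
    set v₁ := v - t * iop n k w with hv₁def
    obtain ⟨hmul1, hmul2⟩ :=
      leadMonomial_monomial_mul (mS n k) ha hg0 (e := Lv - Lg)
    have hLvsum : Lv - Lg + Lg = Lv := tsub_add_cancel_of_le hgle
    rw [hLvsum] at hmul1 hmul2
    have hv₁L : v₁ ∈ L := Ideal.sub_mem L hv (Ideal.mul_mem_left _ _ (hG.1 hgG))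
    have hxpLg : xp Lg = 0 := by
      classical
      have hmem := leadMonomial_mem_support (mS n k) hg0
      have hsupp : ((iop n k) w).support = Finset.image (Finsupp.mapDomain Sum.inr) w.support :=
        support_rename_of_injective Sum.inr_injective
      rw [hsupp] at hmem
      obtain ⟨d, _, hd⟩ := Finset.mem_image.1 hmem
      ext i
      rw [xp_apply, hLgdef, ← hd]
      simp only [Finsupp.coe_zero, Pi.zero_apply]
      exact Finsupp.mapDomain_notin_range _ _ (by rintro ⟨j, hj⟩; exact Sum.inr_ne_inl (hj : (Sum.inr j : Fin n ⊕ Fin k) = Sum.inl i))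
    have hxpt : xp (Lv - Lg) = β := by
      rw [xp_tsub, hxpLg, tsub_zero, hLvdef, xp_leadMonomial hv0]
      rfl
    have hslice : ∀ γ, Slc γ (t * iop n k w)
        = if β = γ then w * monomial (pp (Lv - Lg)) a else 0 := by
      intro γ
      show coeff γ (ee n k _) = _
      rw [map_mul, ee_monomial, ee_rename_inr, hxpt, mul_comm, C_mul_monomial, coeff_monomial]
    have hSlc_ne : ∀ γ, γ ≠ β → Slc γ v₁ = Slc γ v := by
      intro γ hγ
      show coeff γ (ee n k _) = _
      rw [map_sub, coeff_sub]
      have := hslice γ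
      rw [if_neg (fun h => hγ h.symm)] at this
      rw [show coeff γ (ee n k (t * iop n k w)) = Slc γ _
        from rfl, this, sub_zero]
      rfl
    have hSlcβ : Slc β v₁ = Slc β v - w * monomial (pp (Lv - Lg)) a := by
      show coeff β (ee n k _) = _
      rw [map_sub, coeff_sub]
      have := hslice β
      rw [if_pos rfl] at this
      rw [show coeff β (ee n k (t * iop n k w)) = Slc β _
        from rfl, this]
      rfl
    have hSatβ : ¬ SatE L q (Slc β v₁) := by
      rw [hSlcβ, mul_comm w]
      intro h
      exact hSat (satE_of_sub_mul (hG.1 hgG) h)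
    have hSlcβ0 : Slc β v₁ ≠ 0 := fun h => hSatβ (h ▸ satE_zero)
    have hv₁0 : v₁ ≠ 0 := by
      intro h
      apply hSlcβ0
      rw [h]
      show coeff β (ee n k 0) = 0
      rw [map_zero, coeff_zero]
    have halphav₁ : alphag n k v₁ = β := by
      apply leadMonomial_eq_of (mX n) hSlcβ0
      intro γ hγ
      have hne : γ ≠ β := by
        intro h
        rw [h] at hγ
        exact lt_irrefl _ hγ
      rw [show coeff γ (ee n k v₁) = Slc γ v₁ from rfl, hSlc_ne γ hne]
      exact coeff_eq_zero_of_gt (mX n) hγ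
    have hlt : toLex (leadMonomial (mS n k) v₁) < M := by
      rw [← hM]
      rw [← hLgdef] at hmul2
      have hsub := sub_leadTerm_lt (mS n k) hv0
        (a := v) (b := monomial (Lv - Lg) a * iop n k w)
        (by rw [hmul1, hLvdef]) (by rw [hmul1, hmul2, ← hLvdef, hadef,
          div_mul_cancel₀ _ hlcg]) hv₁0
      rwa [lex_toSyn, lex_toSyn] at hsub
    obtain ⟨g', hg'G, hg'r, hg'le⟩ := IH _ hlt v₁ hv₁L hv₁0 rfl (by rwa [halphav₁])
    exact ⟨g', hg'G, hg'r, by rwa [halphav₁] at hg'le⟩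

end Core

section MLsec
variable {n k : ℕ} {L : Ideal (MvPolynomial (Fin n ⊕ₗ Fin k) ℂ)}
  {G : Set (MvPolynomial (Fin n ⊕ₗ Fin k) ℂ)} {q : Fin k → ℂ}

lemma ML (hG : IsGroebnerBasis (mS n k) L G)
    (hq : ∀ w : MvPolynomial (Fin k) ℂ, iop n k w ∈ L → eval q w = 0)
    (hcG : ∀ g ∈ G, g ∉ Set.range (iop n k) → eval q (cg n k g) ≠ 0)
    (β : Lex (Fin n →₀ ℕ)) :
    ∀ u : MvPolynomial (Fin n ⊕ₗ Fin k) ℂ, u ∈ L → u ≠ 0 → toLex (alphag n k u) = β →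
      Stair n k q G β (phi q n u) := by
  induction β using WellFoundedLT.induction with
  | _ β IH =>
  intro u huL hu0 hβ
  subst hβ
  set c := Slc (alphag n k u) u with hcdef
  by_cases hSat : SatE L q c
  · -- CASE I : saturated lead coefficient, kill the whole top slice
    obtain ⟨s, hs, hmem⟩ := hSat
    set u' := iop n k s * u - monomial (cmb (alphag n k u) 0) 1 * iop n k (s * c) with hu'def
    have hu'L : u' ∈ L :=
      Ideal.sub_mem L (Ideal.mul_mem_left _ _ huL) (Ideal.mul_mem_left _ _ hmem)
    have hslice2 : ∀ γ, Slc γ (monomial (cmb (alphag n k u) 0) (1 : ℂ) * iop n k (s * c))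
        = if alphag n k u = γ then s * c else 0 := by
      intro γ
      show coeff γ (ee n k _) = _
      rw [map_mul, ee_monomial, ee_rename_inr, xp_cmb, pp_cmb, monomial_zero', map_one,
        mul_comm, C_mul_monomial, mul_one, coeff_monomial]
    have hSlcu' : ∀ γ, Slc γ u' = s * Slc γ u - (if alphag n k u = γ then s * c else 0) := by
      intro γ
      show coeff γ (ee n k _) = _
      rw [map_sub, coeff_sub, map_mul, ee_rename_inr, coeff_C_mul]
      rw [show coeff γ (ee n k (monomial (cmb (alphag n k u) 0) 1 * iop n k (s * c)))
        = Slc γ (monomial (cmb (alphag n k u) 0) 1 * iop n k (s * c)) from rfl, hslice2]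
      rfl
    have htop : ∀ γ, toLex (alphag n k u) ≤ toLex γ → Slc γ u' = 0 := by
      intro γ hγ
      rcases eq_or_lt_of_le hγ with h | h
      · have h' : alphag n k u = γ := toLex.injective h
        rw [hSlcu' γ, if_pos h', ← h', ← hcdef, sub_eq_zero]
      · have h' : alphag n k u ≠ γ := fun he => lt_irrefl _ (he ▸ h)
        have hz : Slc γ u = 0 := coeff_eq_zero_of_gt (mX n) h
        rw [hSlcu' γ, if_neg h', hz, mul_zero, sub_zero]
    have hφu' : phi q n u' = C (eval q s) * phi q n u := by
      rw [hu'def, map_sub, map_mul, map_mul, phi_rename_inr, phi_rename_inr,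
        hq (s * c) hmem, C_0, mul_zero, sub_zero]
    by_cases hu'0 : u' = 0
    · have hz : phi q n u = 0 := by
        have h0 := hφu'
        rw [hu'0, map_zero] at h0
        rcases mul_eq_zero.1 h0.symm with h | h
        · exact absurd (C_injective _ _ (by rw [h, C_0])) hs
        · exact h
      rw [hz]
      exact Stair.zero _
    · have hlt : toLex (alphag n k u') < toLex (alphag n k u) := by
        have h1 : Slc (alphag n k u') u' ≠ 0 := lc_ne_zero (mX n) (ee_ne_zero hu'0)
        by_contra hle
        push_neg at hle
        exact h1 (htop _ hle)
      have hst := IH _ hlt u' hu'L hu'0 rfl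
      have hform : phi q n u = (eval q s)⁻¹ • phi q n u' := by
        rw [hφu', C_mul', smul_smul, inv_mul_cancel₀ hs, one_smul]
      rw [hform]
      exact stair_weaken (stair_smul _ hst) (le_of_lt hlt)
  · -- CASE II : use `inner` to find a divisor of the lead x-monomial
    obtain ⟨g, hgG, hgr, hgle⟩ :=
      inner (q := q) hG (toLex (leadMonomial (mS n k) u)) u huL hu0 rfl hSat
    set ν := alphag n k u - alphag n k g with hνdef
    set cs := cg n k g with hcsdef
    have hνβ : ν + alphag n k g = alphag n k u := by
      rw [hνdef, tsub_add_cancel_of_le hgle]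
    set T := monomial (cmb ν 0) (1 : ℂ) * (iop n k c * g) with hTdef
    set uh := iop n k cs * u - T with huhdef
    have huhL : uh ∈ L :=
      Ideal.sub_mem L (Ideal.mul_mem_left _ _ huL)
        (Ideal.mul_mem_left _ _ (Ideal.mul_mem_left _ _ (hG.1 hgG)))
    have hsliceT : ∀ γ, Slc γ T = if ν ≤ γ then c * Slc (γ - ν) g else 0 := by
      intro γ
      show coeff γ (ee n k _) = _
      rw [map_mul, map_mul, ee_monomial, ee_rename_inr, xp_cmb, pp_cmb, monomial_zero',
        map_one, coeff_monomial_mul', coeff_C_mul]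
      split_ifs with h
      · rw [one_mul]; rfl
      · rfl
    have hSlcuh : ∀ γ, Slc γ uh = cs * Slc γ u - Slc γ T := by
      intro γ
      show coeff γ (ee n k _) = _
      rw [map_sub, coeff_sub, map_mul, ee_rename_inr, coeff_C_mul]
      rfl
    have htop : ∀ γ, toLex (alphag n k u) ≤ toLex γ → Slc γ uh = 0 := by
      intro γ hγ
      rcases eq_or_lt_of_le hγ with h | h
      · have h' : γ = alphag n k u := (toLex.injective h).symm
        have hν : ν ≤ γ := by rw [h', hνdef]; exact tsub_le_self
        have hγν : γ - ν = alphag n k g := by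
          rw [h', hνdef]
          exact tsub_tsub_cancel_of_le hgle
        rw [hSlcuh, hsliceT, if_pos hν, hγν, h', ← hcdef,
          show Slc (alphag n k g) g = cs from rfl, mul_comm, sub_self]
      · have hz : Slc γ u = 0 := coeff_eq_zero_of_gt (mX n) h
        rw [hSlcuh, hsliceT, hz, mul_zero]
        split_ifs with hν
        · have hz2 : Slc (γ - ν) g = 0 := by
            apply coeff_eq_zero_of_gt (mX n)
            show toLex (alphag n k g) < toLex (γ - ν)
            have hγeq : γ - ν + ν = γ := tsub_add_cancel_of_le hν
            have h2 : toLex (ν + alphag n k g) < toLex (γ - ν + ν) := by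
              rw [hγeq, hνβ]; exact h
            rw [add_comm ν (alphag n k g)] at h2
            rw [toLex_add, toLex_add] at h2
            exact lt_of_add_lt_add_right h2
          rw [hz2, mul_zero, zero_sub, neg_zero]
        · rw [zero_sub, neg_zero]
    have hφT : phi q n T = monomial ν (eval q c) * phi q n g := by
      rw [hTdef, map_mul, map_mul, phi_monX, phi_rename_inr, ← mul_assoc,
        mul_comm (monomial ν (1:ℂ)) (C (eval q c)), C_mul_monomial, mul_one]
    have hcsq : eval q cs ≠ 0 := hcG g hgG hgr
    have hφuh : C (eval q cs) * phi q n u = phi q n uh + monomial ν (eval q c) * phi q n g := by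
      rw [huhdef, map_sub, map_mul, phi_rename_inr, hφT]
      ring
    have hform : phi q n u
        = monomial ν ((eval q cs)⁻¹ * eval q c) * phi q n g + (eval q cs)⁻¹ • phi q n uh := by
      have h1 : phi q n u = (eval q cs)⁻¹ • (C (eval q cs) * phi q n u) := by
        rw [C_mul', smul_smul, inv_mul_cancel₀ hcsq, one_smul]
      rw [h1, hφuh, smul_add, ← smul_mul_assoc, smul_monomial, smul_eq_mul, add_comm]
    rw [hform]
    by_cases huh0 : uh = 0
    · have hz : (eval q cs)⁻¹ • phi q n uh = 0 := by rw [huh0, map_zero, smul_zero]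
      rw [hz]
      have := Stair.step (n := n) (k := k) (q := q) (B := toLex (alphag n k u))
        (B' := toLex (alphag n k u)) (κ := (eval q cs)⁻¹ * eval q c) (μ := ν)
        hgG hgr (by rw [hνβ]) (Stair.zero _) (fun h => absurd rfl h)
      simpa using this
    · have hlt : toLex (alphag n k uh) < toLex (alphag n k u) := by
        have h1 : Slc (alphag n k uh) uh ≠ 0 := lc_ne_zero (mX n) (ee_ne_zero huh0)
        by_contra hle
        push_neg at hle
        exact h1 (htop _ hle)
      have hst := IH _ hlt uh huhL huh0 rfl
      exact Stair.step hgG hgr (by rw [hνβ]) (stair_smul _ hst) (fun _ => by rw [hνβ]; exact hlt)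

end MLsec

end SpecGB

open SpecGB in
/-- Specialization of Gröbner bases (CLO, Ch. 4 §7, Thm. 2). Let `L ⊆ ℂ[x,p]` have Gröbner
basis `G` for the lex order `x₁ > … > x_n > p₁ > … > p_k`. For `g ∈ G` with `g ∉ ℂ[p]`,
write `g = c_g(p)·x^{α_g} + h_g` (with `x^{α_g}` the lex-leading `x`-monomial of `g` viewed
in `(ℂ[p])[x]` and `c_g ∈ ℂ[p]` its coefficient). If `q ∈ V(L ∩ ℂ[p])` and `c_g(q) ≠ 0` for
all such `g`, then `{φ_q(g) | g ∈ G, g ∉ ℂ[p]}` is a Gröbner basis of `φ_q(L) ⊆ ℂ[x]` for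
the lex order `x₁ > … > x_n`. -/
theorem specialization_of_groebner_basis {n k : ℕ}
    (L : Ideal (MvPolynomial (Fin n ⊕ₗ Fin k) ℂ))
    (G : Set (MvPolynomial (Fin n ⊕ₗ Fin k) ℂ))
    (hG : IsGroebnerBasis MonomialOrder.lex L G)
    (q : Fin k → ℂ)
    -- `q ∈ V(L ∩ ℂ[p])`
    (hq : ∀ g : MvPolynomial (Fin k) ℂ, rename Sum.inr g ∈ L → eval q g = 0)
    -- the leading coefficients `c_g(p)` do not vanish at `q`
    (hc : ∀ g ∈ G, g ∉ Set.range (rename (Sum.inr : Fin k → Fin n ⊕ₗ Fin k)) →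
      eval q (coeff
        (leadMonomial (MonomialOrder.lex : MonomialOrder (Fin n)) (sumAlgEquiv ℂ (Fin n) (Fin k) g))
        (sumAlgEquiv ℂ (Fin n) (Fin k) g)) ≠ 0) :
    IsGroebnerBasis (MonomialOrder.lex : MonomialOrder (Fin n))
      (Ideal.map (aeval (Sum.elim X fun j => C (q j)) :
          MvPolynomial (Fin n ⊕ₗ Fin k) ℂ →ₐ[ℂ] MvPolynomial (Fin n) ℂ).toRingHom L)
      ((aeval (Sum.elim X fun j => C (q j)) :
          MvPolynomial (Fin n ⊕ₗ Fin k) ℂ →ₐ[ℂ] MvPolynomial (Fin n) ℂ) ''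
        (G \ Set.range (rename (Sum.inr : Fin k → Fin n ⊕ₗ Fin k)))) := by
  have hGb : IsGroebnerBasis (mS n k) L G := hG
  have hq' : ∀ w : MvPolynomial (Fin k) ℂ, iop n k w ∈ L → eval q w = 0 := hq
  have hcG : ∀ g ∈ G, g ∉ Set.range (iop n k) → eval q (cg n k g) ≠ 0 := hc
  have hrange : Set.range (rename (Sum.inr : Fin k → Fin n ⊕ₗ Fin k))
      = Set.range (iop n k) := rfl
  set φ : MvPolynomial (Fin n ⊕ₗ Fin k) ℂ →ₐ[ℂ] MvPolynomial (Fin n) ℂ :=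
    (aeval (Sum.elim X fun j => C (q j))) with hφdef
  have hφphi : ∀ F, φ F = phi q n F := fun _ => rfl
  have hcomp : φ.comp (rename (Sum.inl : Fin n → Fin n ⊕ₗ Fin k)) =
      AlgHom.id ℂ (MvPolynomial (Fin n) ℂ) := by
    apply MvPolynomial.algHom_ext
    intro i
    simp [hφdef]
    exact (congrArg _ (rename_X _ _)).trans (aeval_X _ _)
  have hsurj : Function.Surjective φ.toRingHom := by
    intro h
    refine ⟨rename (Sum.inl : Fin n → Fin n ⊕ₗ Fin k) h, ?_⟩
    have := AlgHom.congr_fun hcomp h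
    simp at this
    exact this
  -- the three components
  refine ⟨?_, ?_, ?_⟩
  · rintro _ ⟨g, ⟨hgG, _⟩, rfl⟩
    exact Ideal.mem_map_of_mem _ (hGb.1 hgG)
  · -- span equality
    apply le_antisymm
    · rw [Ideal.span_le]
      rintro _ ⟨g, ⟨hgG, _⟩, rfl⟩
      exact Ideal.mem_map_of_mem _ (hGb.1 hgG)
    · have h1 : Ideal.map φ.toRingHom L = Ideal.span (φ.toRingHom '' G) := by
        rw [← hGb.2.1, Ideal.map_span]
      rw [h1, Ideal.span_le]
      rintro _ ⟨g, hgG, rfl⟩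
      by_cases hgr : g ∈ Set.range (iop n k)
      · obtain ⟨w, rfl⟩ := hgr
        have hz : φ.toRingHom (iop n k w) = 0 := by
          show φ (iop n k w) = 0
          rw [hφphi, phi_rename_inr, hq' w (hGb.1 hgG), C_0]
        rw [hz]
        exact Submodule.zero_mem _
      · exact Ideal.subset_span ⟨g, ⟨hgG, hrange ▸ hgr⟩, rfl⟩
  · -- lead term ideals
    apply le_antisymm
    · rw [ltIdeal, Ideal.span_le]
      rintro _ ⟨p, ⟨g, ⟨hgG, _⟩, rfl⟩, hp0, rfl⟩
      exact Ideal.subset_span ⟨φ g, Ideal.mem_map_of_mem _ (hGb.1 hgG), hp0, rfl⟩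
    · rw [ltIdeal, Ideal.span_le]
      rintro _ ⟨f, hf, hf0, rfl⟩
      have hf' : f ∈ Ideal.map φ.toRingHom L := hf
      obtain ⟨F, hFL, hFf⟩ := (Ideal.mem_map_iff_of_surjective φ.toRingHom hsurj).1 hf'
      have hF0 : F ≠ 0 := by
        intro h
        rw [h, map_zero] at hFf
        exact hf0 hFf.symm
      have hstair := ML hGb hq' hcG (toLex (alphag n k F)) F hFL hF0 rfl
      have hFf' : phi q n F = f := hFf
      rw [hFf'] at hstair
      obtain ⟨-, g, hgG, hgr, hgle⟩ := stair_extract hcG hstair hf0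
      have hcgq : eval q (cg n k g) ≠ 0 := hcG g hgG hgr
      obtain ⟨hlmg, hlcg⟩ := phi_lm (q := q) hcgq
      have hφg0 : phi q n g ≠ 0 := by
        intro h
        rw [h, coeff_zero] at hlcg
        exact hcgq hlcg.symm
      have hlt : leadTerm (mX n) f
          = monomial (leadMonomial (mX n) f - alphag n k g)
              (coeff (leadMonomial (mX n) f) f * (eval q (cg n k g))⁻¹)
            * leadTerm (mX n) (phi q n g) := by
        rw [leadTerm, leadTerm, hlmg, hlcg, monomial_mul, tsub_add_cancel_of_le hgle,
          inv_mul_cancel_right₀ hcgq]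
      rw [hlt]
      apply Ideal.mul_mem_left
      exact Ideal.subset_span ⟨phi q n g, ⟨g, ⟨hgG, hrange ▸ hgr⟩, rfl⟩, hφg0, rfl⟩
end
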